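/- arXiv:2504.01720 — 2 statements merged into one kernel-verified Lean document; each statement's English description precedes it below -/
import Mathlib

section
/- The family of languages accepted by IETWGFAs under initialized even computation equals the family of languages generated by even linear grammars. -/
namespace IETW

/-- An input-erasing two-way general finite automaton (IETWGFA). -/
structure GFA (T : Type) : Type 1 where
  Q : Type
  finQ : Finite Q
  start : Q
  accept : Set Q
  /-- Left rules: `(x, q, p)` represents `x q → p`. -/
  ruleL : Set (List T × Q × Q)
  /-- Right rules: `(q, x, p)` represents `q x → p`. -/
  ruleR : Set (Q × List T × Q)
  finL : ruleL.Finite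
  finR : ruleR.Finite

variable {T : Type}

/-- One move, labelled by its direction (`true` = left) and the number of erased symbols. -/
inductive GFA.Step (M : GFA T) :
    List T × M.Q × List T → Bool × ℕ → List T × M.Q × List T → Prop
  | left {u v x : List T} {q p : M.Q} (h : (x, q, p) ∈ M.ruleL) :
      GFA.Step M (u ++ x, q, v) (true, x.length) (u, p, v)
  | right {u v x : List T} {q p : M.Q} (h : (q, x, p) ∈ M.ruleR) :
      GFA.Step M (u, q, x ++ v) (false, x.length) (u, p, v)

/-- A computation along a list of move labels. -/
inductive GFA.Chain (M : GFA T) :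
    List T × M.Q × List T → List (Bool × ℕ) → List T × M.Q × List T → Prop
  | nil (c) : GFA.Chain M c [] c
  | cons {c c' c'' l ls} (h : GFA.Step M c l c') (h' : GFA.Chain M c' ls c'') :
      GFA.Chain M c (l :: ls) c''

/-- `L(M)`. -/
def GFA.lang (M : GFA T) : Set (List T) :=
  {w | ∃ x y ls f, w = x ++ y ∧ f ∈ M.accept ∧ M.Chain (x, M.start, y) ls ([], f, [])}

/-- The moves strictly alternate between left and right. -/
def Alternating (ls : List (Bool × ℕ)) : Prop :=
  ls.Chain' (fun a b => a.1 ≠ b.1)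

/-- An even computation: alternating, of even length, and each odd-indexed move reads
the same number of symbols as the following move. -/
def EvenTrace (ls : List (Bool × ℕ)) : Prop :=
  ls.length % 2 = 0 ∧ Alternating ls ∧
    ∀ i, 2 * i + 1 < ls.length →
      (ls.getD (2 * i) (true, 0)).2 = (ls.getD (2 * i + 1) (true, 0)).2

/-- An initialized even computation: one move followed by an even computation. -/
def InitEvenTrace (ls : List (Bool × ℕ)) : Prop :=
  ∃ l ls', ls = l :: ls' ∧ EvenTrace ls'

/-- `L(M)_alt`. -/
def GFA.langAlt (M : GFA T) : Set (List T) :=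
  {w | ∃ x y ls f, w = x ++ y ∧ f ∈ M.accept ∧ Alternating ls ∧
    M.Chain (x, M.start, y) ls ([], f, [])}

/-- `L(M)_even`. -/
def GFA.langEven (M : GFA T) : Set (List T) :=
  {w | ∃ x y ls f, w = x ++ y ∧ f ∈ M.accept ∧ EvenTrace ls ∧
    M.Chain (x, M.start, y) ls ([], f, [])}

/-- `L(M)_init-even`. -/
def GFA.langInitEven (M : GFA T) : Set (List T) :=
  {w | ∃ x y ls f, w = x ++ y ∧ f ∈ M.accept ∧ InitEvenTrace ls ∧
    M.Chain (x, M.start, y) ls ([], f, [])}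

/-- All rules read at most one symbol (IETWSFA). -/
def GFA.Simple (M : GFA T) : Prop :=
  (∀ r ∈ M.ruleL, r.1.length ≤ 1) ∧ (∀ r ∈ M.ruleR, r.2.1.length ≤ 1)

/-- No ε-rules: every rule reads at least one symbol. -/
def GFA.EpsFree (M : GFA T) : Prop :=
  (∀ r ∈ M.ruleL, r.1 ≠ ([] : List T)) ∧ (∀ r ∈ M.ruleR, r.2.1 ≠ ([] : List T))

/-- A linear grammar: rules `A → x B y` (encoded `(A, x, some (B, y))`)
or `A → x` (encoded `(A, x, none)`). -/
structure LG (T : Type) : Type 1 where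
  N : Type
  finN : Finite N
  start : N
  rules : Set (N × List T × Option (N × List T))
  finR : rules.Finite

/-- One derivation step on sentential forms `u A v`. -/
inductive LG.Der (G : LG T) :
    List T × G.N × List T → List T × G.N × List T → Prop
  | step {u v x y : List T} {A B : G.N} (h : (A, x, some (B, y)) ∈ G.rules) :
      LG.Der G (u, A, v) (u ++ x, B, y ++ v)

/-- `L(G)`. -/
def LG.lang (G : LG T) : Set (List T) :=
  {w | ∃ u A v x, Relation.ReflTransGen G.Der ([], G.start, []) (u, A, v) ∧
    (A, x, none) ∈ G.rules ∧ w = u ++ x ++ v}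

/-- Even linear grammar: `|x| = |y|` in every rule `A → x B y`. -/
def LG.Even (G : LG T) : Prop :=
  ∀ r ∈ G.rules, ∀ B (y : List T), r.2.2 = some (B, y) → r.2.1.length = y.length


inductive Paired : Bool → List (Bool × ℕ) → Prop
  | nil (b) : Paired b []
  | cons (b n) {ls} (h : Paired b ls) : Paired b ((b, n) :: (!b, n) :: ls)

lemma Paired.head_eq {b ls} (h : Paired b ls) : ∀ p ∈ ls.head?, p.1 = b := by
  cases h <;> simp

lemma Paired.even {b ls} (h : Paired b ls) : EvenTrace ls := by
  induction h with
  | nil => exact ⟨rfl, List.isChain_nil, by intro i hi; simp at hi⟩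
  | cons n h ih =>
    rename_i ls
    obtain ⟨h1, h2, h3⟩ := ih
    refine ⟨by simp [Nat.add_mod, h1], ?_, ?_⟩
    · rw [Alternating, List.Chain', List.isChain_cons_cons]
      refine ⟨by simp, ?_⟩
      rw [List.isChain_cons]
      exact ⟨fun p hp => by simp [h.head_eq p hp], h2⟩
    · intro i hi
      cases i with
      | zero => simp
      | succ i =>
        have hlt : 2 * i + 1 < ls.length := by simp at hi; omega
        have := h3 i hlt
        have e1 : 2 * (i + 1) = 2 * i + 1 + 1 := by ring
        have e2 : 2 * (i + 1) + 1 = 2 * i + 1 + 1 + 1 := by ring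
        simpa [e1, e2] using this

lemma even_paired : ∀ ls : List (Bool × ℕ), EvenTrace ls → ∀ b : Bool,
    (∀ p ∈ ls.head?, p.1 = b) → Paired b ls
  | [], _, b, _ => Paired.nil b
  | [a], h, _, _ => by simp [EvenTrace] at h
  | (b₁, n₁) :: (b₂, n₂) :: rest, h, b, hb => by
    obtain ⟨h1, h2, h3⟩ := h
    have hb₁ : b₁ = b := hb _ rfl
    rw [Alternating, List.Chain', List.isChain_cons_cons] at h2
    obtain ⟨hne, h2⟩ := h2
    have hb₂ : b₂ = !b := by subst hb₁; cases b₁ <;> cases b₂ <;> simp_all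
    have hn : n₂ = n₁ := by simpa using (h3 0 (by simp only [List.length_cons]; omega)).symm
    rw [List.isChain_cons] at h2
    obtain ⟨hhd, h2⟩ := h2
    have hrest : EvenTrace rest := by
      refine ⟨by simp at h1 ⊢; omega, h2, ?_⟩
      intro i hi
      have := h3 (i + 1) (by simp only [List.length_cons]; omega)
      have e1 : 2 * (i + 1) = 2 * i + 1 + 1 := by ring
      have e2 : 2 * (i + 1) + 1 = 2 * i + 1 + 1 + 1 := by ring
      simpa [e1, e2] using this
    have ih := even_paired rest hrest b (fun p hp => by
      have := hhd p hp
      subst hb₁ hb₂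
      cases hp2 : p.1 <;> cases b₁ <;> simp_all)
    subst hb₁ hb₂ hn
    exact Paired.cons _ _ ih


section DirA
variable (G : LG T)

/-- Automaton simulating an even linear grammar. -/
def ofLG : GFA T where
  Q := Option (G.N ⊕ ↥G.rules)
  finQ := by
    haveI := G.finN; haveI := G.finR.to_subtype
    exact Finite.of_equiv _ (Equiv.optionEquivSumPUnit.{0,0} _).symm
  start := none
  accept := {some (Sum.inl G.start)}
  ruleL := (fun r : {r // r ∈ G.rules} =>
      (r.1.2.1, some (Sum.inl (r.1.2.2.getD (G.start, [])).1), some (Sum.inr r)))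
      '' {r | r.1.2.2 ≠ none}
  ruleR := ((fun r : {r // r ∈ G.rules} =>
      (some (Sum.inr r), (r.1.2.2.getD (G.start, [])).2, some (Sum.inl r.1.1)))
      '' {r | r.1.2.2 ≠ none})
    ∪ ((fun r : {r // r ∈ G.rules} =>
      ((none : Option (G.N ⊕ {r // r ∈ G.rules})), r.1.2.1, some (Sum.inl r.1.1)))
      '' {r | r.1.2.2 = none})
  finL := by haveI := G.finR.to_subtype; exact Set.toFinite _
  finR := by haveI := G.finR.to_subtype; exact Set.toFinite _

lemma chain_of_der (hE : G.Even) :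
    ∀ c, Relation.ReflTransGen G.Der ([], G.start, []) c →
      ∃ ls, Paired true ls ∧
        (ofLG G).Chain (c.1, some (Sum.inl c.2.1), c.2.2) ls
          ([], some (Sum.inl G.start), []) := by
  intro c h
  induction h with
  | refl => exact ⟨[], Paired.nil true, GFA.Chain.nil _⟩
  | tail _ hstep ih =>
    obtain ⟨ls, hp, hc⟩ := ih
    cases hstep with
    | @step u v x y A B hr =>
      refine ⟨(true, x.length) :: (false, y.length) :: ls, ?_, ?_⟩
      · have : y.length = x.length := (hE _ hr B y rfl).symm
        rw [this]
        exact Paired.cons true x.length hp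
      · dsimp only at hc ⊢
        refine GFA.Chain.cons
          (c' := (u, some (Sum.inr ⟨(A, x, some (B, y)), hr⟩), y ++ v)) ?_
          (GFA.Chain.cons (c' := (u, some (Sum.inl A), v)) ?_ hc)
        · exact GFA.Step.left (u := u) ⟨⟨(A, x, some (B, y)), hr⟩, by simp, rfl⟩
        · exact GFA.Step.right (v := v) (Or.inl ⟨⟨(A, x, some (B, y)), hr⟩, by simp, rfl⟩)

lemma der_of_chain :
    ∀ n (ls : List (Bool × ℕ)), ls.length ≤ n → ∀ u A v,
      (ofLG G).Chain (u, some (Sum.inl A), v) ls ([], some (Sum.inl G.start), []) →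
      Relation.ReflTransGen G.Der ([], G.start, []) (u, A, v) := by
  intro n
  induction n with
  | zero =>
    intro ls hls u A v hc
    have : ls = [] := List.eq_nil_of_length_eq_zero (by omega)
    subst this
    cases hc
    exact Relation.ReflTransGen.refl
  | succ n ih =>
    intro ls hls u A v hc
    cases hc with
    | nil => exact Relation.ReflTransGen.refl
    | cons hst hrest =>
      cases hst with
      | right h =>
        exfalso
        rcases h with ⟨r, _, heq⟩ | ⟨r, _, heq⟩ <;> (injection heq with g1 g2; cases g1)
      | left h =>
        obtain ⟨r, hrne, heq⟩ := h
        injection heq with h1 h23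
        injection h23 with h2 h3
        subst h1 h3
        cases hrest with
        | cons hst2 hrest2 =>
          cases hst2 with
          | left h2 =>
            exfalso
            obtain ⟨r2, _, heq2⟩ := h2
            injection heq2 with g1 g23
            injection g23 with g2 g3
            simp at g2
          | right h2 =>
            rcases h2 with ⟨r2, _, heq2⟩ | ⟨r2, _, heq2⟩
            · rename_i u1 ls2 v1 y1 p2 _hm
              injection heq2 with g1 g23
              injection g23 with g2 g3
              injection g1 with g1
              injection g1 with g1
              subst g1
              subst g3
              injection h2 with h2
              injection h2 with h2
              subst h2
              subst g2
              have hlen : ls2.length ≤ n := by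
                simp only [List.length_cons] at hls; omega
              have der := ih ls2 hlen u1 r2.1.1 v1 hrest2
              cases hopt : r2.1.2.2 with
              | none => exact absurd hopt hrne
              | some By =>
                obtain ⟨B2, y2⟩ := By
                have hr1 : (r2.1.1, r2.1.2.1, some (B2, y2)) ∈ G.rules := by
                  rw [← hopt]; exact r2.2
                simp only [hopt, Option.getD_some]
                exact Relation.ReflTransGen.tail der (LG.Der.step hr1)
            · injection heq2 with g1; simp at g1

lemma ofLG_lang (hE : G.Even) : (ofLG G).langInitEven = G.lang := by
  ext w
  constructor
  · rintro ⟨x, y, ls, f, hw, hf, ⟨l, ls', rfl, hev⟩, hc⟩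
    have hf' : f = some (Sum.inl G.start) := hf
    subst hf'
    cases hc with
    | cons hst hrest =>
      cases hst with
      | left h =>
        exfalso
        obtain ⟨r, _, heq⟩ := h
        injection heq with _ h23
        injection h23 with h2 _
        simp [ofLG] at h2
      | right h =>
        rcases h with ⟨r, hrn, heq⟩ | ⟨r, hre, heq⟩
        · exfalso; injection heq with g1 _; simp [ofLG] at g1
        · injection heq with g1 g23
          injection g23 with g2 g3
          subst g3
          subst g2
          rename_i v1
          have der := der_of_chain G ls'.length ls' le_rfl x r.1.1 v1 hrest
          refine ⟨x, r.1.1, v1, r.1.2.1, der, ?_, ?_⟩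
          · have he : ((r : G.N × List T × Option (G.N × List T)).1,
                (r : G.N × List T × Option (G.N × List T)).2.1, none)
                = (r : G.N × List T × Option (G.N × List T)) := by
              rw [← hre]
            rw [he]; exact r.2
          · rw [hw, List.append_assoc]
  · rintro ⟨u, A, v, x, hder, hterm, rfl⟩
    obtain ⟨ls, hp, hc⟩ := chain_of_der G hE _ hder
    dsimp only at hc
    refine ⟨u, x ++ v, (false, x.length) :: ls, some (Sum.inl G.start),
      (List.append_assoc u x v), rfl, ⟨_, ls, rfl, hp.even⟩, ?_⟩
    exact GFA.Chain.cons
      (GFA.Step.right (Or.inr ⟨⟨(A, x, none), hterm⟩, rfl, rfl⟩)) hc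


end DirA

section DirB
variable (M : GFA T)

/-- Even linear grammar simulating initialized even computations of a GFA. -/
def ofGFA : LG T where
  N := Option (M.Q × Bool)
  finN := by
    haveI := M.finQ
    exact Finite.of_equiv _ (Equiv.optionEquivSumPUnit.{0,0} _).symm
  start := none
  rules :=
    ((fun fb : M.Q × Bool =>
        ((none : Option (M.Q × Bool)), ([] : List T), some (some fb, ([] : List T))))
      '' (M.accept ×ˢ Set.univ))
    ∪ ((fun p : (List T × M.Q × M.Q) × (M.Q × List T × M.Q) =>
        (some (p.2.2.2, true), p.1.1, some (some (p.1.2.1, true), p.2.2.1)))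
      '' {p ∈ M.ruleL ×ˢ M.ruleR | p.1.2.2 = p.2.1 ∧ p.1.1.length = p.2.2.1.length})
    ∪ ((fun p : (M.Q × List T × M.Q) × (List T × M.Q × M.Q) =>
        (some (p.2.2.2, false), p.2.1, some (some (p.1.1, false), p.1.2.1)))
      '' {p ∈ M.ruleR ×ˢ M.ruleL | p.1.2.2 = p.2.2.1 ∧ p.2.1.length = p.1.2.1.length})
    ∪ ((fun rb : (List T × M.Q × M.Q) × Bool =>
        (some (rb.1.2.2, rb.2), rb.1.1, (none : Option (Option (M.Q × Bool) × List T))))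
      '' ({r ∈ M.ruleL | r.2.1 = M.start} ×ˢ Set.univ))
    ∪ ((fun rb : (M.Q × List T × M.Q) × Bool =>
        (some (rb.1.2.2, rb.2), rb.1.2.1, (none : Option (Option (M.Q × Bool) × List T))))
      '' ({r ∈ M.ruleR | r.1 = M.start} ×ˢ Set.univ))
  finR := by
    haveI := M.finQ
    refine (((((Set.toFinite _).image _).union
      (((M.finL.prod M.finR).subset (Set.sep_subset _ _)).image _)).union
      (((M.finR.prod M.finL).subset (Set.sep_subset _ _)).image _)).union
      (((M.finL.subset (Set.sep_subset _ _)).prod (Set.toFinite _)).image _)).union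
      (((M.finR.subset (Set.sep_subset _ _)).prod (Set.toFinite _)).image _)

lemma ofGFA_even : (ofGFA M).Even := by
  rintro r hr B y heq
  rcases hr with (((⟨fb, _, rfl⟩ | ⟨p, ⟨_, _, hlen⟩, rfl⟩) | ⟨p, ⟨_, _, hlen⟩, rfl⟩) |
    ⟨rb, _, rfl⟩) | ⟨rb, _, rfl⟩
  · cases heq; simp_all
  · cases heq; simp_all
  · cases heq; simp_all
  · simp at heq
  · simp at heq

lemma chain_of_derB {f : M.Q} {b : Bool} :
    ∀ c, Relation.ReflTransGen (ofGFA M).Der ([], some (f, b), []) c →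
      ∃ q u v, c = (u, (some (q, b) : Option (M.Q × Bool)), v) ∧
        ∃ ls, Paired b ls ∧ M.Chain (u, q, v) ls ([], f, []) := by
  intro c h
  induction h with
  | refl => exact ⟨f, [], [], rfl, [], Paired.nil b, GFA.Chain.nil _⟩
  | tail _ hstep ih =>
    obtain ⟨q, u, v, rfl, ls, hp, hc⟩ := ih
    rcases hstep with @⟨_, _, x, y, A, B, hr⟩
    · 
      rcases hr with (((⟨fb, _, heq⟩ | ⟨p, ⟨⟨h1, h2⟩, h3, h4⟩, heq⟩) |
          ⟨p, ⟨⟨h1, h2⟩, h3, h4⟩, heq⟩) | ⟨rb, _, heq⟩) | ⟨rb, _, heq⟩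
      · exfalso
        injection heq with g1; simp at g1
      · -- LR pair
        injection heq with g1 g23
        injection g23 with g2 g3
        injection g3 with g3
        injection g3 with g3a g3b
        injection g1 with g1
        injection g1 with g1a g1b
        subst g1a g1b g2 g3a g3b
        refine ⟨p.1.2.1, _, _, rfl,
          (true, p.1.1.length) :: (false, p.2.2.1.length) :: ls, ?_, ?_⟩
        · rw [show p.2.2.1.length = p.1.1.length from h4.symm]
          exact Paired.cons true _ hp
        · refine GFA.Chain.cons (c' := (u, p.1.2.2, p.2.2.1 ++ v))
            (GFA.Step.left (u := u) h1) (GFA.Chain.cons (c' := (u, _, v)) ?_ hc)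
          rw [h3]
          exact GFA.Step.right h2
      · -- RL pair
        injection heq with g1 g23
        injection g23 with g2 g3
        injection g3 with g3
        injection g3 with g3a g3b
        injection g1 with g1
        injection g1 with g1a g1b
        subst g1a g1b g2 g3a g3b
        refine ⟨p.1.1, _, _, rfl,
          (false, p.1.2.1.length) :: (true, p.2.1.length) :: ls, ?_, ?_⟩
        · rw [show p.2.1.length = p.1.2.1.length from h4]
          exact Paired.cons false _ hp
        · refine GFA.Chain.cons (c' := (u ++ p.2.1, p.1.2.2, v))
            (GFA.Step.right h1) (GFA.Chain.cons (c' := (u, _, v)) ?_ hc)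
          rw [h3]
          exact GFA.Step.left h2
      · exfalso; injection heq with _ g23; injection g23 with _ g3; simp at g3
      · exfalso; injection heq with _ g23; injection g23 with _ g3; simp at g3

lemma step_true_inv {M : GFA T} {u q v n c} (h : M.Step (u, q, v) (true, n) c) :
    ∃ x u' p, u = u' ++ x ∧ x.length = n ∧ (x, q, p) ∈ M.ruleL ∧ c = (u', p, v) := by
  cases h with
  | left h' => exact ⟨_, _, _, rfl, rfl, h', rfl⟩

lemma step_false_inv {M : GFA T} {u q v n c} (h : M.Step (u, q, v) (false, n) c) :
    ∃ y v' p, v = y ++ v' ∧ y.length = n ∧ (q, y, p) ∈ M.ruleR ∧ c = (u, p, v') := by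
  cases h with
  | right h' => exact ⟨_, _, _, rfl, rfl, h', rfl⟩

lemma der_of_chainB {f : M.Q} {b : Bool} :
    ∀ ls, Paired b ls → ∀ u q v, M.Chain (u, q, v) ls ([], f, []) →
      Relation.ReflTransGen (ofGFA M).Der ([], some (f, b), [])
        (u, (some (q, b) : Option (M.Q × Bool)), v) := by
  intro ls hp
  induction hp with
  | nil =>
    intro u q v hc
    cases hc
    exact Relation.ReflTransGen.refl
  | cons n h ihp =>
    intro u q v hc
    cases hc with
    | cons hst hrest =>
      cases hst with
      | left h1 =>
        rename_i u1 x pm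
        cases hrest with
        | cons hst2 hrest2 =>
          simp only [Bool.not_true] at hst2
          obtain ⟨y, v1, q2, rfl, hy, h2, rfl⟩ := step_false_inv hst2
          have der := ihp _ _ _ hrest2
          refine Relation.ReflTransGen.tail der (LG.Der.step ?_)
          exact Or.inl (Or.inl (Or.inl (Or.inr
            ⟨((x, q, pm), (pm, y, q2)), ⟨⟨h1, h2⟩, rfl, hy.symm⟩, rfl⟩)))
      | right h1 =>
        rename_i v1 y pm
        cases hrest with
        | cons hst2 hrest2 =>
          simp only [Bool.not_false] at hst2
          obtain ⟨x, u1, q2, rfl, hx, h2, rfl⟩ := step_true_inv hst2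
          have der := ihp _ _ _ hrest2
          refine Relation.ReflTransGen.tail der (LG.Der.step ?_)
          exact Or.inl (Or.inl (Or.inr
            ⟨((q, y, pm), (x, pm, q2)), ⟨⟨h1, h2⟩, rfl, hx⟩, rfl⟩))

lemma evenTrace_paired {ls : List (Bool × ℕ)} (h : EvenTrace ls) : ∃ b, Paired b ls := by
  cases ls with
  | nil => exact ⟨true, Paired.nil true⟩
  | cons a t => exact ⟨a.1, even_paired _ h a.1 (by simp)⟩

lemma ofGFA_lang : (ofGFA M).lang = M.langInitEven := by
  ext w
  constructor
  · rintro ⟨u, A, v, x, hder, hterm, rfl⟩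
    rcases hder.cases_head with heq | ⟨c1, hd1, hrest⟩
    · exfalso
      injection heq with h1 h23
      injection h23 with h2 h3
      subst h2
      rcases hterm with (((⟨fb, _, heq'⟩ | ⟨p, _, heq'⟩) | ⟨p, _, heq'⟩) |
        ⟨rb, _, heq'⟩) | ⟨rb, _, heq'⟩
      · injection heq' with _ g23; injection g23 with _ g3; simp at g3
      · injection heq' with g1; simp [ofGFA] at g1
      · injection heq' with g1; simp [ofGFA] at g1
      · injection heq' with g1; simp [ofGFA] at g1
      · injection heq' with g1; simp [ofGFA] at g1
    · cases hd1 with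
      | @step _ _ x0 y0 _ B hr =>
        rcases hr with (((⟨fb, hfb, heq⟩ | ⟨p, _, heq⟩) | ⟨p, _, heq⟩) |
          ⟨rb, _, heq⟩) | ⟨rb, _, heq⟩
        · injection heq with g1 g23
          injection g23 with g2 g3
          injection g3 with g3
          injection g3 with g3a g3b
          subst g2 g3a g3b
          simp only [List.append_nil] at hrest
          obtain ⟨q, u', v', heq', ls, hp, hc⟩ := chain_of_derB M _ hrest
          injection heq' with e1 e23
          injection e23 with e2 e3
          subst e1 e2 e3
          rcases hterm with (((⟨fb', _, heq'⟩ | ⟨p, _, heq'⟩) | ⟨p, _, heq'⟩) |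
            ⟨rb, hrb, heq'⟩) | ⟨rb, hrb, heq'⟩
          · injection heq' with g1'; simp at g1'
          · injection heq' with _ g23'; injection g23' with _ g3'
            cases g3'
          · injection heq' with _ g23'; injection g23' with _ g3'
            cases g3'
          · -- terminal left rule
            injection heq' with g1' g23'
            injection g23' with g2' g3'
            injection g1' with g1'
            injection g1' with g1a g1b
            subst g1a g2'
            have hL : (rb.1.1, M.start, rb.1.2.2) ∈ M.ruleL := by
              rw [← hrb.1.2]; exact hrb.1.1
            refine ⟨u ++ rb.1.1, v, (true, rb.1.1.length) :: ls, fb.1,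
              rfl, hfb.1, ⟨_, ls, rfl, hp.even⟩, ?_⟩
            exact GFA.Chain.cons (GFA.Step.left hL) hc
          · -- terminal right rule
            injection heq' with g1' g23'
            injection g23' with g2' g3'
            injection g1' with g1'
            injection g1' with g1a g1b
            subst g1a g2'
            have hR : (M.start, rb.1.2.1, rb.1.2.2) ∈ M.ruleR := by
              rw [← hrb.1.2]; exact hrb.1.1
            refine ⟨u, rb.1.2.1 ++ v, (false, rb.1.2.1.length) :: ls, fb.1,
              (List.append_assoc u rb.1.2.1 v), hfb.1, ⟨_, ls, rfl, hp.even⟩, ?_⟩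
            exact GFA.Chain.cons (GFA.Step.right hR) hc
        · injection heq with g1; simp [ofGFA] at g1
        · injection heq with g1; simp [ofGFA] at g1
        · injection heq with _ g23; injection g23 with _ g3; simp at g3
        · injection heq with _ g23; injection g23 with _ g3; simp at g3
  · rintro ⟨x0, y0, ls, f, rfl, hf, ⟨l, ls', rfl, hev⟩, hc⟩
    obtain ⟨b, hp⟩ := evenTrace_paired hev
    have hS : ((none : Option (M.Q × Bool)), ([] : List T),
        some (some (f, b), ([] : List T))) ∈ (ofGFA M).rules :=
      Or.inl (Or.inl (Or.inl (Or.inl ⟨(f, b), ⟨hf, trivial⟩, rfl⟩)))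
    cases hc with
    | cons hst hrest =>
      cases hst with
      | left h1 =>
        rename_i u1 x pm
        have der := der_of_chainB M ls' hp _ _ _ hrest
        refine ⟨u1, some (pm, b), y0, x,
          Relation.ReflTransGen.head (LG.Der.step hS) der, ?_, ?_⟩
        · exact Or.inl (Or.inr ⟨((x, M.start, pm), b), ⟨⟨h1, rfl⟩, trivial⟩, rfl⟩)
        · exact (List.append_assoc u1 x y0).symm ▸ rfl
      | right h1 =>
        rename_i v1 x pm
        have der := der_of_chainB M ls' hp _ _ _ hrest
        refine ⟨x0, some (pm, b), v1, x,
          Relation.ReflTransGen.head (LG.Der.step hS) der, ?_, ?_⟩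
        · exact Or.inr ⟨((M.start, x, pm), b), ⟨⟨h1, rfl⟩, trivial⟩, rfl⟩
        · exact (List.append_assoc x0 x v1).symm


end DirB

theorem initeven_family_eq_elg (T : Type) :
    {L : Set (List T) | ∃ M : GFA T, M.langInitEven = L} =
      {L : Set (List T) | ∃ G : LG T, G.Even ∧ G.lang = L} := by
  ext L
  simp only [Set.mem_setOf_eq]
  constructor
  · rintro ⟨M, rfl⟩
    exact ⟨ofGFA M, ofGFA_even M, ofGFA_lang M⟩
  · rintro ⟨G, hE, rfl⟩
    exact ⟨ofLG G, ofLG_lang G hE⟩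

end IETW
end

section
/- Let M = (Q, Σ, R, s, F) be an ε-free IETWSFA and let A ⊆ Σ* be regular. Then there is an IETWSFA M' with L(M') = {uv | usv ⇒* f in M, f ∈ F, uv ∈ A}, so this language is linear. -/
namespace IETW

variable {T : Type}

/-- The language `{uv | usv ⇒* f in M, f ∈ F, uv ∈ A}`. -/
def wholeInputLang {T : Type} (M : GFA T) (A : Set (List T)) : Set (List T) :=
  {w | w ∈ A ∧ ∃ u v f ls, w = u ++ v ∧ f ∈ M.accept ∧
    M.Chain (u, M.start, v) ls ([], f, [])}

section Aux

variable {σ : Type} [Fintype σ]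

lemma pair_eq {α β : Type*} {a a' : α} {b b' : β} (h : (a, b) = (a', b')) :
    a = a' ∧ b = b' :=
  ⟨congrArg Prod.fst h, congrArg Prod.snd h⟩

lemma triple_eq {α β γ : Type*} {a a' : α} {b b' : β} {c c' : γ}
    (h : (a, b, c) = (a', b', c')) : a = a' ∧ b = b' ∧ c = c' :=
  ⟨congrArg Prod.fst h, congrArg (fun p => p.2.1) h, congrArg (fun p => p.2.2) h⟩

/-- Inversion for `GFA.Step`. -/
lemma GFA.step_inv {M : GFA T} {c l c'} (h : M.Step c l c') :
    (∃ u x q p v, c = (u ++ x, q, v) ∧ c' = (u, p, v) ∧ (x, q, p) ∈ M.ruleL) ∨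
    (∃ u x q p v, c = (u, q, x ++ v) ∧ c' = (u, p, v) ∧ (q, x, p) ∈ M.ruleR) := by
  cases h with
  | left h => exact Or.inl ⟨_, _, _, _, _, rfl, rfl, h⟩
  | right h => exact Or.inr ⟨_, _, _, _, _, rfl, rfl, h⟩

/-- Inversion for `LG.Der`. -/
lemma LG.der_inv {G : LG T} {c c'} (h : G.Der c c') :
    ∃ u v x y A B, c = (u, A, v) ∧ c' = (u ++ x, B, y ++ v) ∧
      (A, x, some (B, y)) ∈ G.rules := by
  cases h with
  | step h => exact ⟨_, _, _, _, _, _, rfl, rfl, h⟩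

/-- Product of the GFA `M` with a DFA `D`, checking whole-input membership in `L(D)`. -/
def prodGFA (M : GFA T) (D : DFA T σ) : GFA T where
  Q := Option (M.Q × σ × σ)
  finQ := by
    haveI := M.finQ
    haveI := Fintype.ofFinite M.Q
    exact Finite.of_fintype _
  start := none
  accept := {r | ∃ f b, f ∈ M.accept ∧ b ∈ D.accept ∧ r = some (f, D.start, b)}
  ruleL :=
    ((fun c : σ => (([] : List T), (none : Option (M.Q × σ × σ)),
        some (M.start, c, c))) '' Set.univ)
    ∪ ((fun r : (List T × M.Q × M.Q) × σ × σ =>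
        (r.1.1, some (r.1.2.1, D.evalFrom r.2.1 r.1.1, r.2.2),
          some (r.1.2.2, r.2.1, r.2.2))) '' (M.ruleL ×ˢ Set.univ))
  ruleR :=
    (fun r : (M.Q × List T × M.Q) × σ × σ =>
        (some (r.1.1, r.2.1, r.2.2), r.1.2.1,
          some (r.1.2.2, r.2.1, D.evalFrom r.2.2 r.1.2.1))) '' (M.ruleR ×ˢ Set.univ)
  finL := (Set.finite_univ.image _).union ((M.finL.prod Set.finite_univ).image _)
  finR := (M.finR.prod Set.finite_univ).image _

lemma prodGFA_ruleL_iff {M : GFA T} {D : DFA T σ} {r} :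
    r ∈ (prodGFA M D).ruleL ↔
      (∃ c, r = ([], none, some (M.start, c, c))) ∨
      (∃ x q p a b, (x, q, p) ∈ M.ruleL ∧
        r = (x, some (q, D.evalFrom a x, b), some (p, a, b))) := by
  constructor
  · rintro (⟨c, -, rfl⟩ | ⟨⟨⟨x, q, p⟩, a, b⟩, hm, rfl⟩)
    · exact Or.inl ⟨c, rfl⟩
    · exact Or.inr ⟨x, q, p, a, b, hm.1, rfl⟩
  · rintro (⟨c, rfl⟩ | ⟨x, q, p, a, b, hm, rfl⟩)
    · exact Or.inl ⟨c, trivial, rfl⟩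
    · exact Or.inr ⟨⟨(x, q, p), a, b⟩, ⟨hm, trivial⟩, rfl⟩

lemma prodGFA_ruleR_iff {M : GFA T} {D : DFA T σ} {r} :
    r ∈ (prodGFA M D).ruleR ↔
      ∃ q x p a b, (q, x, p) ∈ M.ruleR ∧
        r = (some (q, a, b), x, some (p, a, D.evalFrom b x)) := by
  constructor
  · rintro ⟨⟨⟨q, x, p⟩, a, b⟩, hm, rfl⟩
    exact ⟨q, x, p, a, b, hm.1, rfl⟩
  · rintro ⟨q, x, p, a, b, hm, rfl⟩
    exact ⟨⟨(q, x, p), a, b⟩, ⟨hm, trivial⟩, rfl⟩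

lemma prodGFA_sound (M : GFA T) (D : DFA T σ) :
    ∀ {c ls c'}, (prodGFA M D).Chain c ls c' →
    ∀ u v (q : M.Q) (a b : σ) f af bf,
      c = (u, some (q, a, b), v) → c' = ([], some (f, af, bf), []) →
      (∃ ls', M.Chain (u, q, v) ls' ([], f, [])) ∧
        D.evalFrom af u = a ∧ D.evalFrom b v = bf := by
  intro c ls c' h
  induction h with
  | nil c =>
    intro u v q a b f af bf h1 h2
    subst h1
    obtain ⟨h3, h4, h5⟩ := triple_eq h2
    obtain ⟨hq, ha, hb⟩ := triple_eq (Option.some.inj h4)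
    subst h3; subst h5; subst hq; subst ha; subst hb
    exact ⟨⟨[], GFA.Chain.nil _⟩, rfl, rfl⟩
  | cons hst hch ih =>
    intro u v q a b f af bf h1 h2
    subst h1; subst h2
    rcases GFA.step_inv hst with ⟨u0, x, q0, p0, v0, hc0, hc1, hrule⟩ |
      ⟨u0, x, q0, p0, v0, hc0, hc1, hrule⟩
    · obtain ⟨hu, hq0, hv0⟩ := triple_eq hc0
      -- hu : u = u0 ++ x, hq0 : some (q,a,b) = q0, hv0 : v = v0
      subst hu
      rw [prodGFA_ruleL_iff] at hrule
      rcases hrule with ⟨c0, heq⟩ | ⟨x', qq, pp, aa, bb, hm, heq⟩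
      · exfalso
        have h5 := (triple_eq heq).2.1
        rw [← hq0] at h5
        simp at h5
      · obtain ⟨hx, hsrc, htgt⟩ := triple_eq heq
        subst hx
        rw [← hq0] at hsrc
        obtain ⟨hqq, ha, hbb⟩ := triple_eq (Option.some.inj hsrc)
        -- hqq : q = qq, ha : a = D.evalFrom aa x, hbb : b = bb
        subst hqq; subst hbb
        obtain ⟨⟨ls', hls'⟩, h6, h7⟩ := ih u0 v0 pp aa b f af bf
          (by rw [hc1, htgt]; rfl) rfl
        refine ⟨⟨(true, x.length) :: ls', GFA.Chain.cons (GFA.Step.left hm) ?_⟩, ?_, ?_⟩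
        · rw [hv0]; exact hls'
        · rw [D.evalFrom_of_append, h6, ← ha]
        · rw [hv0]; exact h7
    · obtain ⟨hu, hq0, hv⟩ := triple_eq hc0
      -- hu : u = u0, hq0 : some (q,a,b) = q0, hv : v = x ++ v0
      subst hu; subst hv
      rw [prodGFA_ruleR_iff] at hrule
      rcases hrule with ⟨qq, x', pp, aa, bb, hm, heq⟩
      obtain ⟨hsrc, hx, htgt⟩ := triple_eq heq
      subst hx
      rw [← hq0] at hsrc
      obtain ⟨hqq, ha, hbb⟩ := triple_eq (Option.some.inj hsrc)
      -- hqq : q = qq, ha : a = aa, hbb : b = bb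
      subst hqq; subst ha; subst hbb
      obtain ⟨⟨ls', hls'⟩, h6, h7⟩ := ih u v0 pp a (D.evalFrom b x) f af bf
        (by rw [hc1, htgt]; rfl) rfl
      refine ⟨⟨(false, x.length) :: ls', GFA.Chain.cons (GFA.Step.right hm) hls'⟩, h6, ?_⟩
      rw [D.evalFrom_of_append]
      exact h7

lemma prodGFA_complete (M : GFA T) (D : DFA T σ) :
    ∀ {c ls c'}, M.Chain c ls c' →
    ∀ u (q : M.Q) v f, c = (u, q, v) → c' = ([], f, []) →
    ∀ af b, ∃ ls', (prodGFA M D).Chain (u, some (q, D.evalFrom af u, b), v) ls'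
      ([], some (f, af, D.evalFrom b v), []) := by
  intro c ls c' h
  induction h with
  | nil c =>
    intro u q v f h1 h2 af b
    subst h1
    obtain ⟨h3, h4, h5⟩ := triple_eq h2
    subst h3; subst h4; subst h5
    exact ⟨[], GFA.Chain.nil _⟩
  | cons hst hch ih =>
    intro u q v f h1 h2 af b
    subst h1; subst h2
    rcases GFA.step_inv hst with ⟨u0, x, q0, p0, v0, hc0, hc1, hrule⟩ |
      ⟨u0, x, q0, p0, v0, hc0, hc1, hrule⟩
    · obtain ⟨hu, hq0, hv0⟩ := triple_eq hc0
      subst hu; subst hq0; subst hv0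
      obtain ⟨ls', hls'⟩ := ih u0 p0 v f hc1 rfl af b
      refine ⟨(true, x.length) :: ls', GFA.Chain.cons (GFA.Step.left ?_) hls'⟩
      rw [prodGFA_ruleL_iff]
      refine Or.inr ⟨x, q, p0, D.evalFrom af u0, b, hrule, ?_⟩
      rw [D.evalFrom_of_append]; rfl
    · obtain ⟨hu, hq0, hv⟩ := triple_eq hc0
      subst hu; subst hq0; subst hv
      obtain ⟨ls', hls'⟩ := ih u p0 v0 f hc1 rfl af (D.evalFrom b x)
      rw [← D.evalFrom_of_append] at hls'
      refine ⟨(false, x.length) :: ls', GFA.Chain.cons (GFA.Step.right ?_) hls'⟩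
      rw [prodGFA_ruleR_iff]
      exact ⟨q, x, p0, D.evalFrom af u, b, hrule, rfl⟩

lemma prodGFA_lang (M : GFA T) (D : DFA T σ) :
    (prodGFA M D).lang = wholeInputLang M (D.accepts : Set (List T)) := by
  ext w
  constructor
  · rintro ⟨x, y, ls, f', hw, hacc, hch⟩
    obtain ⟨f, b, hf, hb, rfl⟩ := hacc
    cases hch with
    | @cons _ c1 _ l1 ls1 hst hch' =>
      rcases GFA.step_inv hst with ⟨u0, x0, q0, p0, v0, hc0, hc1, hrule⟩ |
        ⟨u0, x0, q0, p0, v0, hc0, hc1, hrule⟩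
      · obtain ⟨hx, hq0, hy⟩ := triple_eq hc0
        rw [prodGFA_ruleL_iff] at hrule
        rcases hrule with ⟨c0, heq⟩ | ⟨x', qq, pp, aa, bb, hm, heq⟩
        · obtain ⟨hx0, -, hp0⟩ := triple_eq heq
          obtain ⟨⟨ls', hls'⟩, h6, h7⟩ := prodGFA_sound M D hch' u0 v0 M.start c0 c0 f
            D.start b (by rw [hc1, hp0]; rfl) rfl
          rw [hx0, List.append_nil] at hx
          subst hx; subst hy
          constructor
          · show w ∈ D.accepts
            rw [hw, DFA.mem_accepts, DFA.eval, D.evalFrom_of_append, h6, h7]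
            exact hb
          · exact ⟨x, y, f, ls', hw, hf, hls'⟩
        · exfalso
          have h5 := (triple_eq heq).2.1
          rw [← hq0] at h5
          simp [prodGFA] at h5
      · exfalso
        rw [prodGFA_ruleR_iff] at hrule
        rcases hrule with ⟨qq, x', pp, aa, bb, hm, heq⟩
        have h5 := (triple_eq heq).1
        rw [← (triple_eq hc0).2.1] at h5
        simp [prodGFA] at h5
  · rintro ⟨hwA, u, v, f, ls, rfl, hf, hch⟩
    obtain ⟨ls', hls'⟩ := prodGFA_complete M D hch u M.start v f rfl rfl D.start
      (D.evalFrom D.start u)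
    have hstep : (prodGFA M D).Step (u ++ [], none, v) (true, ([] : List T).length)
        (u, some (M.start, D.evalFrom D.start u, D.evalFrom D.start u), v) :=
      GFA.Step.left (prodGFA_ruleL_iff.2 (Or.inl ⟨D.evalFrom D.start u, rfl⟩))
    rw [List.append_nil] at hstep
    refine ⟨u, v, (true, 0) :: ls', some (f, D.start, D.evalFrom (D.evalFrom D.start u) v),
      rfl, ⟨f, _, hf, ?_, rfl⟩, GFA.Chain.cons hstep hls'⟩
    rw [← D.evalFrom_of_append]
    exact hwA

lemma prodGFA_simple (M : GFA T) (hS : M.Simple) (D : DFA T σ) : (prodGFA M D).Simple := by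
  constructor
  · intro r hr
    rcases prodGFA_ruleL_iff.1 hr with ⟨c, rfl⟩ | ⟨x, q, p, a, b, hm, rfl⟩
    · simp
    · exact hS.1 _ hm
  · intro r hr
    rcases prodGFA_ruleR_iff.1 hr with ⟨q, x, p, a, b, hm, rfl⟩
    exact hS.2 _ hm

/-- The linear grammar simulating reversed computations of `M`, tracking DFA states of `D`. -/
def prodLG (M : GFA T) (D : DFA T σ) : LG T where
  N := Option (M.Q × σ × σ)
  finN := by
    haveI := M.finQ
    haveI := Fintype.ofFinite M.Q
    exact Finite.of_fintype _
  start := none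
  rules :=
    ((fun r : M.Q × σ => ((none : Option (M.Q × σ × σ)), ([] : List T),
        some (some (r.1, D.start, r.2), ([] : List T)))) '' (M.accept ×ˢ D.accept))
    ∪ ((fun r : (List T × M.Q × M.Q) × σ × σ =>
        ((some (r.1.2.2, r.2.1, r.2.2) : Option (M.Q × σ × σ)), r.1.1,
          some (some (r.1.2.1, D.evalFrom r.2.1 r.1.1, r.2.2), ([] : List T)))) ''
        (M.ruleL ×ˢ Set.univ))
    ∪ ((fun r : (M.Q × List T × M.Q) × σ × σ =>
        ((some (r.1.2.2, r.2.1, D.evalFrom r.2.2 r.1.2.1) : Option (M.Q × σ × σ)),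
          ([] : List T), some (some (r.1.1, r.2.1, r.2.2), r.1.2.1))) ''
        (M.ruleR ×ˢ Set.univ))
    ∪ ((fun a : σ => ((some (M.start, a, a) : Option (M.Q × σ × σ)), ([] : List T),
        (none : Option (Option (M.Q × σ × σ) × List T)))) '' Set.univ)
  finR := by
    haveI := M.finQ
    exact ((((M.accept ×ˢ D.accept).toFinite.image _).union
      ((M.finL.prod Set.finite_univ).image _)).union
      ((M.finR.prod Set.finite_univ).image _)).union
      (Set.finite_univ.image _)

lemma prodLG_rules_iff {M : GFA T} {D : DFA T σ} {r} :
    r ∈ (prodLG M D).rules ↔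
      (∃ f b, f ∈ M.accept ∧ b ∈ D.accept ∧
        r = (none, [], some (some (f, D.start, b), []))) ∨
      (∃ x q p a b, (x, q, p) ∈ M.ruleL ∧
        r = (some (p, a, b), x, some (some (q, D.evalFrom a x, b), []))) ∨
      (∃ q x p a b, (q, x, p) ∈ M.ruleR ∧
        r = (some (p, a, D.evalFrom b x), [], some (some (q, a, b), x))) ∨
      (∃ a, r = (some (M.start, a, a), [], none)) := by
  constructor
  · rintro (((⟨⟨f, b⟩, hm, rfl⟩ | ⟨⟨⟨x, q, p⟩, a, b⟩, hm, rfl⟩) |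
        ⟨⟨⟨q, x, p⟩, a, b⟩, hm, rfl⟩) | ⟨a, -, rfl⟩)
    · exact Or.inl ⟨f, b, hm.1, hm.2, rfl⟩
    · exact Or.inr (Or.inl ⟨x, q, p, a, b, hm.1, rfl⟩)
    · exact Or.inr (Or.inr (Or.inl ⟨q, x, p, a, b, hm.1, rfl⟩))
    · exact Or.inr (Or.inr (Or.inr ⟨a, rfl⟩))
  · rintro (⟨f, b, hf, hb, rfl⟩ | ⟨x, q, p, a, b, hm, rfl⟩ |
        ⟨q, x, p, a, b, hm, rfl⟩ | ⟨a, rfl⟩)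
    · exact Or.inl (Or.inl (Or.inl ⟨⟨f, b⟩, ⟨hf, hb⟩, rfl⟩))
    · exact Or.inl (Or.inl (Or.inr ⟨⟨(x, q, p), a, b⟩, ⟨hm, trivial⟩, rfl⟩))
    · exact Or.inl (Or.inr ⟨⟨(q, x, p), a, b⟩, ⟨hm, trivial⟩, rfl⟩)
    · exact Or.inr ⟨a, trivial, rfl⟩

lemma prodLG_sound (M : GFA T) (D : DFA T σ) :
    ∀ {c}, Relation.ReflTransGen (prodLG M D).Der ([], (prodLG M D).start, []) c →
      (c.2.1 = none → c.1 = [] ∧ c.2.2 = []) ∧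
      (∀ (q : M.Q) (a b : σ), c.2.1 = some (q, a, b) →
        (∃ f ls, f ∈ M.accept ∧ M.Chain (c.1, q, c.2.2) ls ([], f, [])) ∧
          D.evalFrom D.start c.1 = a ∧ D.evalFrom b c.2.2 ∈ D.accept) := by
  intro c h
  induction h with
  | refl =>
    refine ⟨fun _ => ⟨rfl, rfl⟩, fun q a b hq => ?_⟩
    exact absurd hq (by simp [prodLG])
  | tail h1 h2 ih =>
    obtain ⟨u, v, x, y, A, B, hc0, hc1, hrule⟩ := LG.der_inv h2
    subst hc0; subst hc1
    rw [prodLG_rules_iff] at hrule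
    rcases hrule with ⟨f0, b0, hf0, hb0, heq⟩ | ⟨x0, q0, p0, a0, b0, hm, heq⟩ |
        ⟨q0, x0, p0, a0, b0, hm, heq⟩ | ⟨a0, heq⟩
    · -- init rule
      obtain ⟨hA, hx, hBy⟩ := triple_eq heq
      obtain ⟨hB, hy⟩ := pair_eq (Option.some.inj hBy)
      obtain ⟨hu, hv⟩ := ih.1 hA
      dsimp only at hu hv
      subst hu; subst hv; subst hB; subst hy; subst hx
      refine ⟨fun hB' => by simp at hB', fun q a b hq => ?_⟩
      obtain ⟨hq1, hq2, hq3⟩ := triple_eq (Option.some.inj hq)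
      -- hq1 : f0 = q, hq2 : D.start = a, hq3 : b0 = b
      subst hq1; subst hq2; subst hq3
      exact ⟨⟨f0, [], hf0, GFA.Chain.nil _⟩, rfl, hb0⟩
    · -- left simulation rule
      obtain ⟨hA, hx, hBy⟩ := triple_eq heq
      subst hx
      obtain ⟨hB, hy⟩ := pair_eq (Option.some.inj hBy)
      obtain ⟨⟨f, ls, hf, hch⟩, ha, hb⟩ := ih.2 p0 a0 b0 hA
      dsimp only at hch ha hb
      subst hB; subst hy
      refine ⟨fun hB' => by simp at hB', fun q a b hq => ?_⟩
      obtain ⟨hq1, hq2, hq3⟩ := triple_eq (Option.some.inj hq)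
      -- hq1 : q0 = q, hq2 : D.evalFrom a0 x = a, hq3 : b0 = b
      subst hq1; subst hq3
      refine ⟨⟨f, (true, x.length) :: ls, hf,
        GFA.Chain.cons (GFA.Step.left hm) hch⟩, ?_, hb⟩
      show D.evalFrom D.start (u ++ x) = a
      rw [D.evalFrom_of_append, ha, hq2]
    · -- right simulation rule
      obtain ⟨hA, hx, hBy⟩ := triple_eq heq
      subst hx
      obtain ⟨hB, hy⟩ := pair_eq (Option.some.inj hBy)
      obtain ⟨⟨f, ls, hf, hch⟩, ha, hb⟩ := ih.2 p0 a0 (D.evalFrom b0 x0) hA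
      dsimp only at hch ha hb
      subst hB; subst hy
      rw [List.append_nil]
      refine ⟨fun hB' => by simp at hB', fun q a b hq => ?_⟩
      obtain ⟨hq1, hq2, hq3⟩ := triple_eq (Option.some.inj hq)
      -- hq1 : q0 = q, hq2 : a0 = a, hq3 : b0 = b
      subst hq1; subst hq2; subst hq3
      refine ⟨⟨f, (false, y.length) :: ls, hf,
        GFA.Chain.cons (GFA.Step.right hm) hch⟩, ha, ?_⟩
      show D.evalFrom b0 (y ++ v) ∈ D.accept
      rw [D.evalFrom_of_append]
      exact hb
    · -- terminal rule cannot occur as a derivation step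
      exfalso
      have h5 := (triple_eq heq).2.2
      simp at h5

lemma prodLG_complete (M : GFA T) (D : DFA T σ) :
    ∀ {c ls c'}, M.Chain c ls c' →
    ∀ u (q : M.Q) v f, c = (u, q, v) → c' = ([], f, []) →
    ∀ (af b' : σ), Relation.ReflTransGen (prodLG M D).Der
      ([], some (f, af, D.evalFrom b' v), [])
      (u, some (q, D.evalFrom af u, b'), v) := by
  intro c ls c' h
  induction h with
  | nil c =>
    intro u q v f h1 h2 af b'
    subst h1
    obtain ⟨h3, h4, h5⟩ := triple_eq h2
    subst h3; subst h4; subst h5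
    exact Relation.ReflTransGen.refl
  | cons hst hch ih =>
    intro u q v f h1 h2 af b'
    subst h1; subst h2
    rcases GFA.step_inv hst with ⟨u0, x, q0, p0, v0, hc0, hc1, hrule⟩ |
      ⟨u0, x, q0, p0, v0, hc0, hc1, hrule⟩
    · obtain ⟨hu, hq0, hv0⟩ := triple_eq hc0
      subst hu; subst hq0; subst hv0
      have ihh := ih u0 p0 v f hc1 rfl af b'
      have hstep : (prodLG M D).Der (u0, some (p0, D.evalFrom af u0, b'), v)
          (u0 ++ x, some (q, D.evalFrom (D.evalFrom af u0) x, b'), [] ++ v) :=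
        LG.Der.step (prodLG_rules_iff.2 (Or.inr (Or.inl
          ⟨x, q, p0, D.evalFrom af u0, b', hrule, rfl⟩)))
      rw [← D.evalFrom_of_append] at hstep
      exact ihh.tail hstep
    · obtain ⟨hu, hq0, hv⟩ := triple_eq hc0
      subst hu; subst hq0; subst hv
      have ihh := ih u p0 v0 f hc1 rfl af (D.evalFrom b' x)
      rw [← D.evalFrom_of_append] at ihh
      have hstep : (prodLG M D).Der (u, some (p0, D.evalFrom af u, D.evalFrom b' x), v0)
          (u ++ [], some (q, D.evalFrom af u, b'), x ++ v0) :=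
        LG.Der.step (prodLG_rules_iff.2 (Or.inr (Or.inr (Or.inl
          ⟨q, x, p0, D.evalFrom af u, b', hrule, rfl⟩))))
      rw [List.append_nil] at hstep
      exact ihh.tail hstep

lemma prodLG_lang (M : GFA T) (D : DFA T σ) :
    (prodLG M D).lang = wholeInputLang M (D.accepts : Set (List T)) := by
  ext w
  constructor
  · rintro ⟨u, A, v, x, hder, hterm, rfl⟩
    rw [prodLG_rules_iff] at hterm
    rcases hterm with ⟨f0, b0, -, -, heq⟩ | ⟨x0, q0, p0, a0, b0, -, heq⟩ |
        ⟨q0, x0, p0, a0, b0, -, heq⟩ | ⟨a0, heq⟩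
    · exact absurd (triple_eq heq).2.2 (by simp)
    · exact absurd (triple_eq heq).2.2 (by simp)
    · exact absurd (triple_eq heq).2.2 (by simp)
    · obtain ⟨hA, hx, -⟩ := triple_eq heq
      obtain ⟨⟨f, ls, hf, hch⟩, ha, hb⟩ := (prodLG_sound M D hder).2 M.start a0 a0 hA
      dsimp only at hch ha hb
      rw [hx, List.append_nil]
      constructor
      · show u ++ v ∈ D.accepts
        rw [DFA.mem_accepts, DFA.eval, D.evalFrom_of_append, ha]
        exact hb
      · exact ⟨u, v, f, ls, rfl, hf, hch⟩
  · rintro ⟨hwA, u, v, f, ls, rfl, hf, hch⟩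
    have hder := prodLG_complete M D hch u M.start v f rfl rfl D.start (D.evalFrom D.start u)
    have hbf : D.evalFrom (D.evalFrom D.start u) v ∈ D.accept := by
      rw [← D.evalFrom_of_append]
      exact hwA
    have hinit : (prodLG M D).Der ([], (prodLG M D).start, [])
        ([] ++ [], some (f, D.start, D.evalFrom (D.evalFrom D.start u) v), [] ++ []) :=
      LG.Der.step (prodLG_rules_iff.2 (Or.inl
        ⟨f, D.evalFrom (D.evalFrom D.start u) v, hf, hbf, rfl⟩))
    refine ⟨u, some (M.start, D.evalFrom D.start u, D.evalFrom D.start u), v, [],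
      (Relation.ReflTransGen.single hinit).trans hder,
      prodLG_rules_iff.2 (Or.inr (Or.inr (Or.inr ⟨D.evalFrom D.start u, rfl⟩))), by simp⟩

end Aux

theorem input_whole_regular_linear {T : Type} (M : GFA T) (hS : M.Simple) (hE : M.EpsFree)
    (A : Set (List T)) (hA : Language.IsRegular (A : Language T)) :
    (∃ M' : GFA T, M'.Simple ∧ M'.lang = wholeInputLang M A) ∧
      (∃ G : LG T, G.lang = wholeInputLang M A) := by
  obtain ⟨σ, fσ, D, hD⟩ := hA
  haveI : Fintype σ := fσ
  have hAeq : (D.accepts : Set (List T)) = A := hD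
  exact ⟨⟨prodGFA M D, prodGFA_simple M hS D, by rw [prodGFA_lang, hAeq]⟩,
    ⟨prodLG M D, by rw [prodLG_lang, hAeq]⟩⟩

end IETW
end
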